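/- Fix an integer k ≥ 2 and positive reals λ_1, …, λ_k with Σ_{i=1}^k λ_i = k - 1. Under the law P₀*, the bin counts Z_1, …, Z_k are independent with Z_i ~ Po(λ_i); for t ∈ ℝ, under the law P_t* they are independent with Z_i ~ Po(λ_{i,t}) where λ_{i,t} = λ_i·e^{t(i-k/2)}. Let TREE be the event that Z_1 + … + Z_j ≥ j for all 1 ≤ j ≤ k-1 and Z_1 + … + Z_k = k-1, let M = C(k,2) - Σ_{i=1}^k i·Z_i, and let E*[M] = C(k,2) - Σ_{i=1}^k i·λ_i. Then, provided P₀*[TREE] > 0, E₀*[e^{-t(M - E*[M])} | TREE] = exp(Σ_{i=1}^k λ_i·[e^{t(i-k/2)} - 1 - t(i-k/2)]) · P_t*[TREE]/P₀*[TREE]. -/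
import Mathlib


open Filter Topology Real Finset

-- Indicator of a proposition, as a real number.
open Classical in
noncomputable def ind (P : Prop) : ℝ := if P then 1 else 0

/-- Poisson point mass: `Pr[Po(r) = n]`. -/
noncomputable def poissonP (r : ℝ) (n : ℕ) : ℝ := Real.exp (-r) * r ^ n / n.factorial

/-- The event TREE for bin counts `z : Fin k → ℕ` (bin `i+1` holds `z i` balls):
`Z_1 + ⋯ + Z_j ≥ j` for all `1 ≤ j ≤ k-1`, and `Z_1 + ⋯ + Z_k = k-1`. -/
def TREEz (k : ℕ) (z : Fin k → ℕ) : Prop :=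
  (∀ j, 1 ≤ j → j ≤ k - 1 →
      j ≤ ∑ i ∈ Finset.univ.filter (fun i : Fin k => (i : ℕ) < j), z i) ∧
    ∑ i, z i = k - 1

/-- `M = C(k,2) - ∑_{i=1}^k i Z_i`. -/
noncomputable def Mz (k : ℕ) (z : Fin k → ℕ) : ℝ :=
  (Nat.choose k 2 : ℝ) - ∑ i : Fin k, (((i : ℕ) + 1 : ℝ)) * z i

/-- `E*[M] = C(k,2) - ∑_{i=1}^k i λ_i`. -/
noncomputable def EMz (k : ℕ) (lam : Fin k → ℝ) : ℝ :=
  (Nat.choose k 2 : ℝ) - ∑ i : Fin k, (((i : ℕ) + 1 : ℝ)) * lam i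

/-- `P_t*[TREE]`, where under `P_t*` the counts `Z_i` are independent with
`Z_i ∼ Po(λ_{i,t})`, `λ_{i,t} = λ_i e^{t(i - k/2)}`. -/
noncomputable def PtTREE (k : ℕ) (lam : Fin k → ℝ) (t : ℝ) : ℝ :=
  ∑' z : Fin k → ℕ,
    (∏ i : Fin k, poissonP (lam i * Real.exp (t * (((i : ℕ) + 1 : ℝ) - k / 2))) (z i)) *
      ind (TREEz k z)

/-- Proposition `prop-totid`: fix `k ≥ 2` and positive
`λ_1, …, λ_k` with `∑ λ_i = k - 1`.  Then, provided `P₀*[TREE] > 0`, for every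
`t ∈ ℝ`,
`E₀*[e^{-t(M - E*[M])} | TREE]
  = exp(∑_i λ_i [e^{t(i-k/2)} - 1 - t(i-k/2)]) · P_t*[TREE]/P₀*[TREE]`. -/

lemma poisson_tilt (l u : ℝ) (n : ℕ) :
    poissonP (l * Real.exp u) n
      = poissonP l n * Real.exp (l - l * Real.exp u + (n : ℝ) * u) := by
  unfold poissonP
  have h : Real.exp (-(l * Real.exp u)) * Real.exp ((n : ℝ) * u)
      = Real.exp (-l) * Real.exp (l - l * Real.exp u + (n : ℝ) * u) := by
    rw [← Real.exp_add, ← Real.exp_add]; ring_nf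
  rw [mul_pow, ← Real.exp_nat_mul, div_mul_eq_mul_div]
  congr 1
  calc Real.exp (-(l * Real.exp u)) * (l ^ n * Real.exp ((n : ℝ) * u))
      = l ^ n * (Real.exp (-(l * Real.exp u)) * Real.exp ((n : ℝ) * u)) := by ring
    _ = l ^ n * (Real.exp (-l) * Real.exp (l - l * Real.exp u + (n : ℝ) * u)) := by rw [h]
    _ = Real.exp (-l) * l ^ n * Real.exp (l - l * Real.exp u + (n : ℝ) * u) := by ring

theorem tilted_mgf_identity (k : ℕ) (hk : 2 ≤ k) (lam : Fin k → ℝ)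
    (hpos : ∀ i, 0 < lam i) (hsum : ∑ i, lam i = (k : ℝ) - 1) (t : ℝ)
    (hTree : 0 < PtTREE k lam 0) :
    (∑' z : Fin k → ℕ,
        (∏ i : Fin k, poissonP (lam i) (z i)) * ind (TREEz k z) *
          Real.exp (-(t * (Mz k z - EMz k lam)))) / PtTREE k lam 0 =
      Real.exp (∑ i : Fin k,
          lam i * (Real.exp (t * (((i : ℕ) + 1 : ℝ) - k / 2)) - 1 -
            t * (((i : ℕ) + 1 : ℝ) - k / 2))) *
        PtTREE k lam t / PtTREE k lam 0 := by
  have h : (∑' z : Fin k → ℕ,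
      (∏ i : Fin k, poissonP (lam i) (z i)) * ind (TREEz k z) *
        Real.exp (-(t * (Mz k z - EMz k lam)))) =
      Real.exp (∑ i : Fin k,
          lam i * (Real.exp (t * (((i : ℕ) + 1 : ℝ) - k / 2)) - 1 -
            t * (((i : ℕ) + 1 : ℝ) - k / 2))) * PtTREE k lam t := by
    rw [PtTREE, ← tsum_mul_left]
    apply tsum_congr
    intro z
    by_cases hz : TREEz k z
    · simp only [ind, if_pos hz, mul_one]
      have hfac : ∀ i ∈ Finset.univ,
          poissonP (lam i * Real.exp (t * (((i : ℕ) + 1 : ℝ) - (k : ℝ) / 2))) (z i)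
            = poissonP (lam i) (z i) *
              Real.exp (lam i - lam i * Real.exp (t * (((i : ℕ) + 1 : ℝ) - (k : ℝ) / 2))
                + (z i : ℝ) * (t * (((i : ℕ) + 1 : ℝ) - (k : ℝ) / 2))) :=
        fun i _ => poisson_tilt _ _ _
      rw [Finset.prod_congr rfl hfac, Finset.prod_mul_distrib, ← Real.exp_sum]
      have hzsum : (∑ i, (z i : ℝ)) = (k : ℝ) - 1 := by
        rw [← Nat.cast_sum, hz.2, Nat.cast_sub (by omega), Nat.cast_one]
      have hE : -(t * (Mz k z - EMz k lam)) =
          (∑ i : Fin k,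
            lam i * (Real.exp (t * (((i : ℕ) + 1 : ℝ) - (k : ℝ) / 2)) - 1 -
              t * (((i : ℕ) + 1 : ℝ) - (k : ℝ) / 2))) +
          (∑ i : Fin k, (lam i - lam i * Real.exp (t * (((i : ℕ) + 1 : ℝ) - (k : ℝ) / 2))
                + (z i : ℝ) * (t * (((i : ℕ) + 1 : ℝ) - (k : ℝ) / 2)))) := by
        have expand : (∑ i : Fin k,
              lam i * (Real.exp (t * (((i : ℕ) + 1 : ℝ) - (k : ℝ) / 2)) - 1 -
                t * (((i : ℕ) + 1 : ℝ) - (k : ℝ) / 2))) +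
            (∑ i : Fin k, (lam i - lam i * Real.exp (t * (((i : ℕ) + 1 : ℝ) - (k : ℝ) / 2))
                  + (z i : ℝ) * (t * (((i : ℕ) + 1 : ℝ) - (k : ℝ) / 2)))) =
            (∑ i : Fin k, (t * ((((i : ℕ) + 1 : ℝ)) * (z i : ℝ))
                - t * ((((i : ℕ) + 1 : ℝ)) * lam i)))
              - t * ((k : ℝ) / 2) * ((∑ i, (z i : ℝ)) - ∑ i, lam i) := by
          rw [← Finset.sum_add_distrib, ← Finset.sum_sub_distrib, Finset.mul_sum,
            ← Finset.sum_sub_distrib]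
          exact Finset.sum_congr rfl fun i _ => by ring
        rw [expand, hzsum, hsum, Finset.sum_sub_distrib, ← Finset.mul_sum, ← Finset.mul_sum,
          Mz, EMz]
        ring
      rw [hE, Real.exp_add]
      ring
    · simp [ind, hz]
  rw [h, mul_div_assoc]
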